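/- Equivalence of matrix MPC and MAP inference (Theorem 1): Consider the cost J = Σ_{t=k}^{k+H} [tr((X_t - X^ref)^T R⁻¹ (X_t - X^ref)) + tr((U_t - U^ref)^T Q_U⁻¹ (U_t - U^ref)) + tr(ΔU_{t+1}^T Q_{ΔU}⁻¹ ΔU_{t+1})], and the log-posterior of the virtual system in which X^ref = X_t + V_{X,t}, U^ref = U_t + V_{U,t}, ΔU_{t+1} = W_t with mutually independent matrix normal noises W_t ~ MN(0; Σ_W, Ψ_W), V_{X,t} ~ MN(0; Σ_{V_X}, Ψ_{V_X}), V_{U,t} ~ MN(0; Σ_{V_U}, Ψ_{V_U}). If Σ_{V_X} ⊗ Ψ_{V_X} = I ⊗ R, Σ_{V_U} ⊗ Ψ_{V_U} = I ⊗ Q_U, and Σ_W ⊗ Ψ_W = I ⊗ Q_{ΔU}, then the log-posterior equals -J up to an additive constant, so the MPC minimizers coincide with the MAP maximizers. -/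
import Mathlib

open Matrix Kronecker Finset

/-- The matrix normal density `MN(M; S, P)` evaluated at `X ∈ ℝ^{n×m}`. -/
noncomputable def mnPDF {n m : ℕ} (M : Matrix (Fin n) (Fin m) ℝ)
    (S : Matrix (Fin n) (Fin n) ℝ) (P : Matrix (Fin m) (Fin m) ℝ)
    (X : Matrix (Fin n) (Fin m) ℝ) : ℝ :=
  (2 * Real.pi) ^ (-(n * m : ℝ) / 2) * S.det ^ (-(m : ℝ) / 2) * P.det ^ (-(n : ℝ) / 2) *
    Real.exp (-(1 / 2) * Matrix.trace (S⁻¹ * (X - M) * P⁻¹ * (X - M)ᵀ))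

/-- The matrix-based MPC tracking cost `J` over the horizon. -/
noncomputable def mpcCost {n l m H : ℕ}
    (R : Matrix (Fin n) (Fin n) ℝ) (QU QdU : Matrix (Fin l) (Fin l) ℝ)
    (Xref : Matrix (Fin n) (Fin m) ℝ) (Uref : Matrix (Fin l) (Fin m) ℝ)
    (X : Fin (H + 1) → Matrix (Fin n) (Fin m) ℝ)
    (U : Fin (H + 1) → Matrix (Fin l) (Fin m) ℝ)
    (dU : Fin (H + 1) → Matrix (Fin l) (Fin m) ℝ) : ℝ :=
  ∑ t : Fin (H + 1),
    (Matrix.trace ((X t - Xref)ᵀ * R⁻¹ * (X t - Xref)) +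
      Matrix.trace ((U t - Uref)ᵀ * QU⁻¹ * (U t - Uref)) +
      Matrix.trace ((dU t)ᵀ * QdU⁻¹ * (dU t)))

/-- The log-posterior of the virtual system: the virtual observations are
`X^ref = X_t + V_{X,t}`, `U^ref = U_t + V_{U,t}`, and the increments `ΔU_{t+1} = W_t` have
matrix normal priors. -/
noncomputable def logPosterior {n l m H : ℕ}
    (SVX : Matrix (Fin n) (Fin n) ℝ) (PVX : Matrix (Fin m) (Fin m) ℝ)
    (SVU SW : Matrix (Fin l) (Fin l) ℝ) (PVU PW : Matrix (Fin m) (Fin m) ℝ)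
    (Xref : Matrix (Fin n) (Fin m) ℝ) (Uref : Matrix (Fin l) (Fin m) ℝ)
    (X : Fin (H + 1) → Matrix (Fin n) (Fin m) ℝ)
    (U : Fin (H + 1) → Matrix (Fin l) (Fin m) ℝ)
    (dU : Fin (H + 1) → Matrix (Fin l) (Fin m) ℝ) : ℝ :=
  ∑ t : Fin (H + 1),
    (Real.log (mnPDF (X t) SVX PVX Xref) + Real.log (mnPDF (U t) SVU PVU Uref) +
      Real.log (mnPDF 0 SW PW (dU t)))

/-- Kronecker condition gives the entrywise relation on inverses. -/
lemma inv_entry_aux {n m : ℕ} {S R : Matrix (Fin n) (Fin n) ℝ} {P : Matrix (Fin m) (Fin m) ℝ}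
    (hk : S ⊗ₖ P =
      Matrix.reindex (Equiv.prodComm (Fin m) (Fin n)) (Equiv.prodComm (Fin m) (Fin n))
        ((1 : Matrix (Fin m) (Fin m) ℝ) ⊗ₖ R)) :
    ∀ i i' j j', S⁻¹ i i' * P⁻¹ j j' = (1 : Matrix (Fin m) (Fin m) ℝ) j j' * R⁻¹ i i' := by
  intro i i' j j'
  have h2 : (S ⊗ₖ P)⁻¹ =
      Matrix.reindex (Equiv.prodComm (Fin m) (Fin n)) (Equiv.prodComm (Fin m) (Fin n))
        (((1 : Matrix (Fin m) (Fin m) ℝ) ⊗ₖ R)⁻¹) := by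
    rw [hk, Matrix.inv_reindex]
  rw [Matrix.inv_kronecker, Matrix.inv_kronecker, inv_one] at h2
  have := congrFun (congrFun h2 (i, j)) (i', j')
  simpa [Matrix.kroneckerMap_apply, Matrix.reindex_apply, Matrix.submatrix_apply] using this

/-- Trace identity from the entrywise inverse relation. -/
lemma key_trace_aux {n m : ℕ} {S R : Matrix (Fin n) (Fin n) ℝ} {P : Matrix (Fin m) (Fin m) ℝ}
    (h : ∀ i i' j j', S⁻¹ i i' * P⁻¹ j j' = (1 : Matrix (Fin m) (Fin m) ℝ) j j' * R⁻¹ i i')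
    (A : Matrix (Fin n) (Fin m) ℝ) :
    Matrix.trace (S⁻¹ * A * P⁻¹ * Aᵀ) = Matrix.trace (Aᵀ * R⁻¹ * A) := by
  simp only [Matrix.trace, Matrix.diag, Matrix.mul_apply, Matrix.transpose_apply,
    Finset.sum_mul, Finset.mul_sum]
  have key : ∀ (i : Fin n) (j' : Fin m),
      (∑ j : Fin m, ∑ i' : Fin n, S⁻¹ i i' * A i' j * P⁻¹ j j' * A i j') =
        ∑ i' : Fin n, R⁻¹ i i' * A i' j' * A i j' := by
    intro i j'
    rw [Finset.sum_comm]
    refine Finset.sum_congr rfl fun i' _ => ?_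
    calc (∑ j : Fin m, S⁻¹ i i' * A i' j * P⁻¹ j j' * A i j')
        = ∑ j : Fin m, (if j = j' then R⁻¹ i i' * A i' j * A i j' else 0) := by
          refine Finset.sum_congr rfl fun j _ => ?_
          have hh := h i i' j j'
          by_cases hj : j = j'
          · subst hj
            simp only [Matrix.one_apply_eq, one_mul] at hh
            rw [if_pos rfl]
            linear_combination (A i' j * A i j) * hh
          · simp only [Matrix.one_apply_ne hj, zero_mul] at hh
            rw [if_neg hj]
            linear_combination (A i' j * A i j') * hh
      _ = R⁻¹ i i' * A i' j' * A i j' := by simp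
  calc (∑ i : Fin n, ∑ j' : Fin m, ∑ j : Fin m, ∑ i' : Fin n,
        S⁻¹ i i' * A i' j * P⁻¹ j j' * A i j')
      = ∑ i : Fin n, ∑ j' : Fin m, ∑ i' : Fin n, R⁻¹ i i' * A i' j' * A i j' := by
        exact Finset.sum_congr rfl fun i _ => Finset.sum_congr rfl fun j' _ => key i j'
    _ = ∑ j' : Fin m, ∑ i' : Fin n, ∑ i : Fin n, A i j' * R⁻¹ i i' * A i' j' := by
        rw [Finset.sum_comm]
        refine Finset.sum_congr rfl fun j' _ => ?_
        rw [Finset.sum_comm]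
        exact Finset.sum_congr rfl fun i' _ => Finset.sum_congr rfl fun i _ => by ring

/-- The log of the matrix normal pdf splits as a constant minus half the trace form. -/
lemma log_mnPDF_aux {n m : ℕ} {S : Matrix (Fin n) (Fin n) ℝ} {P : Matrix (Fin m) (Fin m) ℝ}
    (hS : S.PosDef) (hP : P.PosDef) (M X : Matrix (Fin n) (Fin m) ℝ) :
    Real.log (mnPDF M S P X) =
      Real.log ((2 * Real.pi) ^ (-(n * m : ℝ) / 2) * S.det ^ (-(m : ℝ) / 2) *
          P.det ^ (-(n : ℝ) / 2)) +
        -(1 / 2) * Matrix.trace (S⁻¹ * (X - M) * P⁻¹ * (X - M)ᵀ) := by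
  have hk : (0 : ℝ) < (2 * Real.pi) ^ (-(n * m : ℝ) / 2) * S.det ^ (-(m : ℝ) / 2) *
      P.det ^ (-(n : ℝ) / 2) := by
    have h1 : (0 : ℝ) < 2 * Real.pi := by positivity
    exact mul_pos (mul_pos (Real.rpow_pos_of_pos h1 _) (Real.rpow_pos_of_pos hS.det_pos _))
      (Real.rpow_pos_of_pos hP.det_pos _)
  rw [mnPDF, Real.log_mul (ne_of_gt hk) (Real.exp_ne_zero _), Real.log_exp]

/-- Theorem 1: if `Σ_{V_X} ⊗ Ψ_{V_X} = I ⊗ R`, `Σ_{V_U} ⊗ Ψ_{V_U} = I ⊗ Q_U`,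
and `Σ_W ⊗ Ψ_W = I ⊗ Q_{ΔU}` (indices matched via the product-swap reindexing), with all
matrices positive definite and the noises mutually independent, then the log-posterior of the
virtual system is an additive constant minus `½ J`; consequently the MPC minimizers coincide
with the MAP maximizers. -/
theorem stmt11 {n l m H : ℕ}
    (R : Matrix (Fin n) (Fin n) ℝ) (QU QdU : Matrix (Fin l) (Fin l) ℝ)
    (hR : R.PosDef) (hQU : QU.PosDef) (hQdU : QdU.PosDef)
    (SVX : Matrix (Fin n) (Fin n) ℝ) (PVX : Matrix (Fin m) (Fin m) ℝ)
    (SVU SW : Matrix (Fin l) (Fin l) ℝ) (PVU PW : Matrix (Fin m) (Fin m) ℝ)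
    (hSVX : SVX.PosDef) (hPVX : PVX.PosDef) (hSVU : SVU.PosDef) (hPVU : PVU.PosDef)
    (hSW : SW.PosDef) (hPW : PW.PosDef)
    (hkX : SVX ⊗ₖ PVX =
      Matrix.reindex (Equiv.prodComm (Fin m) (Fin n)) (Equiv.prodComm (Fin m) (Fin n))
        ((1 : Matrix (Fin m) (Fin m) ℝ) ⊗ₖ R))
    (hkU : SVU ⊗ₖ PVU =
      Matrix.reindex (Equiv.prodComm (Fin m) (Fin l)) (Equiv.prodComm (Fin m) (Fin l))
        ((1 : Matrix (Fin m) (Fin m) ℝ) ⊗ₖ QU))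
    (hkW : SW ⊗ₖ PW =
      Matrix.reindex (Equiv.prodComm (Fin m) (Fin l)) (Equiv.prodComm (Fin m) (Fin l))
        ((1 : Matrix (Fin m) (Fin m) ℝ) ⊗ₖ QdU))
    (Xref : Matrix (Fin n) (Fin m) ℝ) (Uref : Matrix (Fin l) (Fin m) ℝ) :
    (∃ c : ℝ, ∀ (X : Fin (H + 1) → Matrix (Fin n) (Fin m) ℝ)
        (U dU : Fin (H + 1) → Matrix (Fin l) (Fin m) ℝ),
        logPosterior SVX PVX SVU SW PVU PW Xref Uref X U dU =
          -(1 / 2) * mpcCost R QU QdU Xref Uref X U dU + c) ∧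
      (∀ (X X' : Fin (H + 1) → Matrix (Fin n) (Fin m) ℝ)
        (U U' dU dU' : Fin (H + 1) → Matrix (Fin l) (Fin m) ℝ),
        mpcCost R QU QdU Xref Uref X U dU ≤ mpcCost R QU QdU Xref Uref X' U' dU' ↔
          logPosterior SVX PVX SVU SW PVU PW Xref Uref X' U' dU' ≤
            logPosterior SVX PVX SVU SW PVU PW Xref Uref X U dU) := by
  -- the per-term constants
  set cX := Real.log ((2 * Real.pi) ^ (-(n * m : ℝ) / 2) * SVX.det ^ (-(m : ℝ) / 2) *
    PVX.det ^ (-(n : ℝ) / 2)) with hcX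
  set cU := Real.log ((2 * Real.pi) ^ (-(l * m : ℝ) / 2) * SVU.det ^ (-(m : ℝ) / 2) *
    PVU.det ^ (-(l : ℝ) / 2)) with hcU
  set cW := Real.log ((2 * Real.pi) ^ (-(l * m : ℝ) / 2) * SW.det ^ (-(m : ℝ) / 2) *
    PW.det ^ (-(l : ℝ) / 2)) with hcW
  have main : ∀ (X : Fin (H + 1) → Matrix (Fin n) (Fin m) ℝ)
      (U dU : Fin (H + 1) → Matrix (Fin l) (Fin m) ℝ),
      logPosterior SVX PVX SVU SW PVU PW Xref Uref X U dU =
        -(1 / 2) * mpcCost R QU QdU Xref Uref X U dU + (H + 1 : ℝ) * (cX + cU + cW) := by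
    intro X U dU
    have termX : ∀ t, Real.log (mnPDF (X t) SVX PVX Xref) =
        cX + -(1 / 2) * Matrix.trace ((X t - Xref)ᵀ * R⁻¹ * (X t - Xref)) := by
      intro t
      rw [log_mnPDF_aux hSVX hPVX]
      have h1 := key_trace_aux (inv_entry_aux hkX) (Xref - X t)
      have h2 : (Xref - X t)ᵀ * R⁻¹ * (Xref - X t) = (X t - Xref)ᵀ * R⁻¹ * (X t - Xref) := by
        rw [show Xref - X t = -(X t - Xref) from (neg_sub _ _).symm]
        simp only [Matrix.transpose_neg, Matrix.neg_mul, Matrix.mul_neg, neg_neg]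
      rw [h1, h2]
    have termU : ∀ t, Real.log (mnPDF (U t) SVU PVU Uref) =
        cU + -(1 / 2) * Matrix.trace ((U t - Uref)ᵀ * QU⁻¹ * (U t - Uref)) := by
      intro t
      rw [log_mnPDF_aux hSVU hPVU]
      have h1 := key_trace_aux (inv_entry_aux hkU) (Uref - U t)
      have h2 : (Uref - U t)ᵀ * QU⁻¹ * (Uref - U t) = (U t - Uref)ᵀ * QU⁻¹ * (U t - Uref) := by
        rw [show Uref - U t = -(U t - Uref) from (neg_sub _ _).symm]
        simp only [Matrix.transpose_neg, Matrix.neg_mul, Matrix.mul_neg, neg_neg]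
      rw [h1, h2]
    have termW : ∀ t, Real.log (mnPDF 0 SW PW (dU t)) =
        cW + -(1 / 2) * Matrix.trace ((dU t)ᵀ * QdU⁻¹ * (dU t)) := by
      intro t
      rw [log_mnPDF_aux hSW hPW]
      have h1 := key_trace_aux (inv_entry_aux hkW) (dU t - 0)
      rw [h1, sub_zero]
    rw [logPosterior, mpcCost]
    have step : ∀ t : Fin (H + 1),
        Real.log (mnPDF (X t) SVX PVX Xref) + Real.log (mnPDF (U t) SVU PVU Uref) +
          Real.log (mnPDF 0 SW PW (dU t)) =
        (cX + cU + cW) + -(1 / 2) *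
          (Matrix.trace ((X t - Xref)ᵀ * R⁻¹ * (X t - Xref)) +
            Matrix.trace ((U t - Uref)ᵀ * QU⁻¹ * (U t - Uref)) +
            Matrix.trace ((dU t)ᵀ * QdU⁻¹ * (dU t))) := by
      intro t
      rw [termX t, termU t, termW t]
      ring
    rw [Finset.sum_congr rfl fun t _ => step t, Finset.sum_add_distrib, ← Finset.mul_sum]
    simp only [Finset.sum_const, Finset.card_univ, Fintype.card_fin, nsmul_eq_mul]
    push_cast
    ring
  refine ⟨⟨(H + 1 : ℝ) * (cX + cU + cW), main⟩, ?_⟩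
  intro X X' U U' dU dU'
  rw [main X U dU, main X' U' dU']
  constructor <;> intro h <;> linarith
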